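/- Let R be a (not necessarily commutative) ring, ι a type, and u : ι → ι → R a Čech 1-cocycle (i.e. u i k = u i j + u j k for all i, j, k). Then for all i, j, k, l one has (u j k)·(u k l)·(u l j) − (u i k)·(u k l)·(u l i) + (u i j)·(u j l)·(u l i) − (u i j)·(u j k)·(u k i) + [u i j, (u j k)·(u k l)] = 0. -/

import Mathlib

/-- For a Čech 1-cocycle `u` with values in a (not necessarily commutative) ring,
`(u j k)(u k l)(u l j) − (u i k)(u k l)(u l i) + (u i j)(u j l)(u l i)
  − (u i j)(u j k)(u k i) + [u i j, (u j k)(u k l)] = 0`. -/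
theorem cocycle_triple_product_identity {ι : Type*} {R : Type*} [Ring R]
    (u : ι → ι → R) (hu : ∀ i j k, u i k = u i j + u j k) :
    ∀ i j k l, u j k * u k l * u l j - u i k * u k l * u l i + u i j * u j l * u l i
      - u i j * u j k * u k i
      + (u i j * (u j k * u k l) - u j k * u k l * u i j) = 0 := by
  intro i j k l
  have h0 : ∀ m, u m m = 0 := fun m => left_eq_add.mp (hu m m m)
  have hneg : ∀ a b, u b a = -(u a b) := fun a b => by
    have h := hu a b a
    rw [h0] at h
    exact eq_neg_of_add_eq_zero_right h.symm
  have h1 : u i k = u i j + u j k := hu i j k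
  have h2 : u j l = u j k + u k l := hu j k l
  have h3 : u i l = u i j + (u j k + u k l) := by rw [hu i j l, h2]
  rw [hneg j l, h2, hneg i l, h3, hneg i k, h1]
  noncomm_ring
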